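/- Let B and D be random vectors, let W be the Moore–Penrose inverse of Var(D) and U the Moore–Penrose inverse of Var(B). Then the adjusted variance satisfies Var_D(B) = (I − T_D(B))·Var(B), where T_D(B) = Cov(B,D)·W·Cov(D,B)·U. -/

import Mathlib

open MeasureTheory Matrix

set_option linter.unusedSectionVars false
set_option maxHeartbeats 1000000

variable {Ω : Type*}

/-- The covariance matrix of two random vectors `B` (dimension `m`) and `D` (dimension `n`):
the `(i,j)` entry is `E[Bᵢ·Dⱼ] − E[Bᵢ]·E[Dⱼ]`. -/
noncomputable def cov [MeasurableSpace Ω] (μ : Measure Ω) {m n : ℕ}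
    (B : Fin m → Ω → ℝ) (D : Fin n → Ω → ℝ) : Matrix (Fin m) (Fin n) ℝ :=
  Matrix.of fun i j =>
    (∫ ω, B i ω * D j ω ∂μ) - (∫ ω, B i ω ∂μ) * (∫ ω, D j ω ∂μ)

/-- `W` is a Moore–Penrose inverse of `V`. -/
def IsMoorePenrose {m n : ℕ} (V : Matrix (Fin m) (Fin n) ℝ)
    (W : Matrix (Fin n) (Fin m) ℝ) : Prop :=
  V * W * V = V ∧ W * V * W = W ∧ (V * W)ᵀ = V * W ∧ (W * V)ᵀ = W * V

/-- The adjusted expectation `E_D(B)` (computed with the matrix `W`, intended to be the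
Moore–Penrose inverse of `Var(D)`): the `i`-th component is
`E[Bᵢ] + Σ_j (Cov(B,D)·W)_{ij}·(Dⱼ − E[Dⱼ])`. -/
noncomputable def adjExp [MeasurableSpace Ω] (μ : Measure Ω) {m n : ℕ}
    (B : Fin m → Ω → ℝ) (D : Fin n → Ω → ℝ)
    (W : Matrix (Fin n) (Fin n) ℝ) : Fin m → Ω → ℝ :=
  fun i ω => (∫ ω', B i ω' ∂μ) + ∑ j, (cov μ B D * W) i j * (D j ω - ∫ ω', D j ω' ∂μ)

/-- The adjusted covariance `Cov_D(B,C) = Cov(B − E_D(B), C − E_D(C))`. -/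
noncomputable def adjCov [MeasurableSpace Ω] (μ : Measure Ω) {m p n : ℕ}
    (B : Fin m → Ω → ℝ) (C : Fin p → Ω → ℝ) (D : Fin n → Ω → ℝ)
    (W : Matrix (Fin n) (Fin n) ℝ) : Matrix (Fin m) (Fin p) ℝ :=
  cov μ (fun i ω => B i ω - adjExp μ B D W i ω) (fun j ω => C j ω - adjExp μ C D W j ω)

/-! ### Moore–Penrose auxiliary lemmas -/

section MP

lemma isMoorePenrose_unique {a b : ℕ} {V : Matrix (Fin a) (Fin b) ℝ}
    {W₁ W₂ : Matrix (Fin b) (Fin a) ℝ}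
    (h₁ : IsMoorePenrose V W₁) (h₂ : IsMoorePenrose V W₂) : W₁ = W₂ := by
  obtain ⟨p₁, q₁, r₁, s₁⟩ := h₁
  obtain ⟨p₂, q₂, r₂, s₂⟩ := h₂
  have hVW : V * W₁ = V * W₂ := by
    calc V * W₁ = (V * W₁)ᵀ := r₁.symm
    _ = W₁ᵀ * Vᵀ := transpose_mul _ _
    _ = W₁ᵀ * (V * W₂ * V)ᵀ := by rw [p₂]
    _ = W₁ᵀ * (Vᵀ * (W₂ᵀ * Vᵀ)) := by rw [transpose_mul, transpose_mul]
    _ = (W₁ᵀ * Vᵀ) * (W₂ᵀ * Vᵀ) := by simp only [Matrix.mul_assoc]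
    _ = (V * W₁)ᵀ * (V * W₂)ᵀ := by rw [transpose_mul, transpose_mul]
    _ = (V * W₁) * (V * W₂) := by rw [r₁, r₂]
    _ = (V * W₁ * V) * W₂ := by simp only [Matrix.mul_assoc]
    _ = V * W₂ := by rw [p₁]
  have hWV : W₁ * V = W₂ * V := by
    calc W₁ * V = (W₁ * V)ᵀ := s₁.symm
    _ = Vᵀ * W₁ᵀ := transpose_mul _ _
    _ = (V * W₂ * V)ᵀ * W₁ᵀ := by rw [p₂]
    _ = (Vᵀ * (W₂ᵀ * Vᵀ)) * W₁ᵀ := by rw [transpose_mul, transpose_mul]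
    _ = ((Vᵀ * W₂ᵀ) * Vᵀ) * W₁ᵀ := by simp only [Matrix.mul_assoc]
    _ = ((W₂ * V)ᵀ * Vᵀ) * W₁ᵀ := by rw [transpose_mul]
    _ = ((W₂ * V) * Vᵀ) * W₁ᵀ := by rw [s₂]
    _ = (W₂ * V) * (Vᵀ * W₁ᵀ) := by rw [Matrix.mul_assoc]
    _ = (W₂ * V) * (W₁ * V)ᵀ := by rw [transpose_mul]
    _ = (W₂ * V) * (W₁ * V) := by rw [s₁]
    _ = W₂ * (V * W₁ * V) := by simp only [Matrix.mul_assoc]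
    _ = W₂ * V := by rw [p₁]
  calc W₁ = W₁ * V * W₁ := q₁.symm
  _ = W₂ * V * W₁ := by rw [hWV]
  _ = W₂ * (V * W₁) := by rw [Matrix.mul_assoc]
  _ = W₂ * (V * W₂) := by rw [hVW]
  _ = W₂ * V * W₂ := by rw [Matrix.mul_assoc]
  _ = W₂ := q₂

lemma IsMoorePenrose.transpose {a b : ℕ} {V : Matrix (Fin a) (Fin b) ℝ}
    {W : Matrix (Fin b) (Fin a) ℝ} (h : IsMoorePenrose V W) :
    IsMoorePenrose Vᵀ Wᵀ := by
  obtain ⟨p, q, r, s⟩ := h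
  refine ⟨?_, ?_, ?_, ?_⟩
  · have h : Vᵀ * Wᵀ * Vᵀ = (V * W * V)ᵀ := by
      rw [transpose_mul, transpose_mul, Matrix.mul_assoc]
    rw [h, p]
  · have h : Wᵀ * Vᵀ * Wᵀ = (W * V * W)ᵀ := by
      rw [transpose_mul, transpose_mul, Matrix.mul_assoc]
    rw [h, q]
  · rw [← transpose_mul, transpose_transpose, s]
  · rw [← transpose_mul, transpose_transpose, r]

/-- The Moore–Penrose inverse of a symmetric matrix is symmetric. -/
lemma IsMoorePenrose.transpose_eq_self {a : ℕ} {V W : Matrix (Fin a) (Fin a) ℝ}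
    (h : IsMoorePenrose V W) (hV : Vᵀ = V) : Wᵀ = W := by
  refine isMoorePenrose_unique ?_ h
  have := h.transpose
  rwa [hV] at this

end MP

/-! ### Integration auxiliary lemmas -/

section Aux

variable [MeasurableSpace Ω] {μ : Measure Ω} [IsProbabilityMeasure μ]

lemma mul_integrable {f g : Ω → ℝ} (hf : MemLp f 2 μ) (hg : MemLp g 2 μ) :
    Integrable (fun ω => f ω * g ω) μ := by
  have h : MemLp (f • g) 1 μ := hg.smul hf
  rw [← memLp_one_iff_integrable]
  exact h

lemma integral_mul_sum {n : ℕ} {f : Ω → ℝ} (hf : MemLp f 2 μ) (c : Fin n → ℝ)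
    {g : Fin n → Ω → ℝ} (hg : ∀ j, MemLp (g j) 2 μ) :
    ∫ ω, f ω * (∑ j, c j * g j ω) ∂μ = ∑ j, c j * ∫ ω, f ω * g j ω ∂μ := by
  have e : ∀ ω, f ω * (∑ j, c j * g j ω) = ∑ j, c j * (f ω * g j ω) := fun ω => by
    rw [Finset.mul_sum]; exact Finset.sum_congr rfl fun j _ => by ring
  simp_rw [e]
  rw [integral_finset_sum _ (fun j _ => (mul_integrable hf (hg j)).const_mul (c j))]
  exact Finset.sum_congr rfl fun j _ => integral_const_mul _ _

lemma integral_sum_mul' {n : ℕ} {f : Ω → ℝ} (hf : MemLp f 2 μ) (c : Fin n → ℝ)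
    {g : Fin n → Ω → ℝ} (hg : ∀ j, MemLp (g j) 2 μ) :
    ∫ ω, (∑ j, c j * g j ω) * f ω ∂μ = ∑ j, c j * ∫ ω, g j ω * f ω ∂μ := by
  simp_rw [mul_comm _ (f _)]
  exact integral_mul_sum hf c hg

lemma memℒp_sum {n : ℕ} (c : Fin n → ℝ) {g : Fin n → Ω → ℝ}
    (hg : ∀ j, MemLp (g j) 2 μ) :
    MemLp (fun ω => ∑ j, c j * g j ω) 2 μ :=
  memLp_finset_sum _ fun j _ => (hg j).const_mul (c j)

/-- Covariance entry as integral of the product of centered variables. -/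
lemma cov_apply_centered {a b : ℕ} {F : Fin a → Ω → ℝ} {G : Fin b → Ω → ℝ}
    (hF : ∀ i, MemLp (F i) 2 μ) (hG : ∀ j, MemLp (G j) 2 μ) (i : Fin a) (j : Fin b) :
    cov μ F G i j
      = ∫ ω, (F i ω - ∫ ω', F i ω' ∂μ) * (G j ω - ∫ ω', G j ω' ∂μ) ∂μ := by
  set p := ∫ ω', F i ω' ∂μ
  set q := ∫ ω', G j ω' ∂μ
  have hFi : Integrable (F i) μ := (hF i).integrable one_le_two
  have hGj : Integrable (G j) μ := (hG j).integrable one_le_two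
  have hFG : Integrable (fun ω => F i ω * G j ω) μ := mul_integrable (hF i) (hG j)
  have e : ∀ ω, (F i ω - p) * (G j ω - q)
      = (F i ω * G j ω - q * F i ω) - (p * G j ω - p * q) := fun ω => by ring
  have h1 : Integrable (fun ω => q * F i ω) μ := hFi.const_mul q
  have h2 : Integrable (fun ω => p * G j ω) μ := hGj.const_mul p
  have h3 : Integrable (fun ω => F i ω * G j ω - q * F i ω) μ := hFG.sub h1
  have h4 : Integrable (fun ω => p * G j ω - p * q) μ := h2.sub (integrable_const _)
  simp_rw [e]
  rw [integral_sub h3 h4, integral_sub hFG h1, integral_sub h2 (integrable_const _),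
    integral_const_mul, integral_const_mul, integral_const]
  simp only [cov, Matrix.of_apply, measure_univ, probReal_univ, ENNReal.toReal_one, one_smul, smul_eq_mul]
  ring

lemma cov_transpose {a b : ℕ} (F : Fin a → Ω → ℝ) (G : Fin b → Ω → ℝ) :
    (cov μ F G)ᵀ = cov μ G F := by
  ext i j
  simp only [cov, transpose_apply, Matrix.of_apply]
  rw [mul_comm (∫ ω, F j ω ∂μ)]
  congr 1
  exact integral_congr_ae (Filter.Eventually.of_forall fun ω => mul_comm _ _)

/-- Kernel of the variance matrix is contained in the kernel of any covariance. -/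
lemma cov_mulVec_eq_zero {a b : ℕ} {B : Fin a → Ω → ℝ} {D : Fin b → Ω → ℝ}
    (hB : ∀ i, Measurable (B i) ∧ MemLp (B i) 2 μ)
    (hD : ∀ i, Measurable (D i) ∧ MemLp (D i) 2 μ)
    (x : Fin a → ℝ) (hx : cov μ B B *ᵥ x = 0) : cov μ D B *ᵥ x = 0 := by
  have hB2 : ∀ i, MemLp (B i) 2 μ := fun i => (hB i).2
  have hD2 : ∀ i, MemLp (D i) 2 μ := fun i => (hD i).2
  set Bc : Fin a → Ω → ℝ := fun i ω => B i ω - ∫ ω', B i ω' ∂μ with hBc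
  set Dc : Fin b → Ω → ℝ := fun j ω => D j ω - ∫ ω', D j ω' ∂μ with hDc
  have hBc2 : ∀ i, MemLp (Bc i) 2 μ := fun i => (hB2 i).sub (memLp_const _)
  have hDc2 : ∀ j, MemLp (Dc j) 2 μ := fun j => (hD2 j).sub (memLp_const _)
  set S : Ω → ℝ := fun ω => ∑ i, x i * Bc i ω with hS
  have hS2 : MemLp S 2 μ := memℒp_sum x hBc2
  -- ∫ S² = x ⬝ᵥ (cov B B *ᵥ x) = 0
  have hint : ∫ ω, S ω * S ω ∂μ = 0 := by
    rw [integral_sum_mul' hS2 x hBc2]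
    have : ∀ i, (∫ ω, Bc i ω * S ω ∂μ) = ∑ k, x k * cov μ B B i k := by
      intro i
      rw [show (∫ ω, Bc i ω * S ω ∂μ) = ∑ k, x k * ∫ ω, Bc i ω * Bc k ω ∂μ from
        integral_mul_sum (hBc2 i) x hBc2]
      exact Finset.sum_congr rfl fun k _ => by rw [cov_apply_centered hB2 hB2]
    simp_rw [this]
    have := congrFun hx
    simp only [Matrix.mulVec, dotProduct, Pi.zero_apply] at this
    calc ∑ i, x i * ∑ k, x k * cov μ B B i k
        = ∑ i, x i * ∑ k, cov μ B B i k * x k := by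
          simp_rw [mul_comm (x _)]
    _ = 0 := by
          simp_rw [this]; simp
  have hSz : S =ᵐ[μ] 0 := by
    have hnn : 0 ≤ fun ω => S ω * S ω := fun ω => mul_self_nonneg _
    have hii : Integrable (fun ω => S ω * S ω) μ := mul_integrable hS2 hS2
    have := (integral_eq_zero_iff_of_nonneg hnn hii).mp hint
    filter_upwards [this] with ω hω
    simpa [mul_self_eq_zero] using hω
  -- conclude
  funext j
  have : (cov μ D B *ᵥ x) j = ∫ ω, Dc j ω * S ω ∂μ := by
    rw [integral_mul_sum (hDc2 j) x hBc2]
    simp only [Matrix.mulVec, dotProduct]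
    exact Finset.sum_congr rfl fun i _ => by
      rw [cov_apply_centered hD2 hB2, mul_comm]
  rw [Pi.zero_apply, this]
  rw [integral_congr_ae (g := fun _ => (0:ℝ)) ?_, integral_zero]
  filter_upwards [hSz] with ω hω
  simp [hω]

end Aux

section Main

variable [MeasurableSpace Ω] {μ : Measure Ω} [IsProbabilityMeasure μ]

lemma integral_sub_mul_sub {f₁ g₁ f₂ g₂ : Ω → ℝ} (h1 : MemLp f₁ 2 μ) (h2 : MemLp g₁ 2 μ)
    (h3 : MemLp f₂ 2 μ) (h4 : MemLp g₂ 2 μ) :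
    ∫ ω, (f₁ ω - g₁ ω) * (f₂ ω - g₂ ω) ∂μ
      = ∫ ω, f₁ ω * f₂ ω ∂μ - ∫ ω, f₁ ω * g₂ ω ∂μ - ∫ ω, g₁ ω * f₂ ω ∂μ
        + ∫ ω, g₁ ω * g₂ ω ∂μ := by
  have e : ∀ ω, (f₁ ω - g₁ ω) * (f₂ ω - g₂ ω)
      = (f₁ ω * f₂ ω - f₁ ω * g₂ ω) - (g₁ ω * f₂ ω - g₁ ω * g₂ ω) := fun ω => by ring
  have h11 := mul_integrable h1 h3
  have h12 := mul_integrable h1 h4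
  have h21 := mul_integrable h2 h3
  have h22 := mul_integrable h2 h4
  have hA : Integrable (fun ω => f₁ ω * f₂ ω - f₁ ω * g₂ ω) μ := h11.sub h12
  have hBi : Integrable (fun ω => g₁ ω * f₂ ω - g₁ ω * g₂ ω) μ := h21.sub h22
  simp_rw [e]
  rw [integral_sub hA hBi, integral_sub h11 h12, integral_sub h21 h22]
  ring

lemma adjCov_expand {m n : ℕ} {B : Fin m → Ω → ℝ} {D : Fin n → Ω → ℝ}
    (hB : ∀ i, MemLp (B i) 2 μ) (hD : ∀ i, MemLp (D i) 2 μ)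
    (W : Matrix (Fin n) (Fin n) ℝ) :
    adjCov μ B B D W
      = cov μ B B - cov μ B D * (cov μ B D * W)ᵀ - (cov μ B D * W) * cov μ D B
        + (cov μ B D * W) * cov μ D D * (cov μ B D * W)ᵀ := by
  set P : Matrix (Fin m) (Fin n) ℝ := cov μ B D * W with hP
  set Bc : Fin m → Ω → ℝ := fun i ω => B i ω - ∫ ω', B i ω' ∂μ with hBc
  set Dc : Fin n → Ω → ℝ := fun j ω => D j ω - ∫ ω', D j ω' ∂μ with hDc
  have hBc2 : ∀ i, MemLp (Bc i) 2 μ := fun i => (hB i).sub (memLp_const _)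
  have hDc2 : ∀ j, MemLp (Dc j) 2 μ := fun j => (hD j).sub (memLp_const _)
  set Y : Fin m → Ω → ℝ := fun i ω => ∑ j, P i j * Dc j ω with hY
  have hY2 : ∀ i, MemLp (Y i) 2 μ := fun i => memℒp_sum _ hDc2
  have hX : ∀ i ω, B i ω - adjExp μ B D W i ω = Bc i ω - Y i ω := by
    intro i ω
    simp only [adjExp, hY, hBc, hDc, ← hP]
    ring
  have hDcint : ∀ j, ∫ ω, Dc j ω ∂μ = 0 := by
    intro j
    simp only [hDc]
    rw [integral_sub ((hD j).integrable one_le_two) (integrable_const _)]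
    simp
  have hXint : ∀ i, ∫ ω, (Bc i ω - Y i ω) ∂μ = 0 := by
    intro i
    rw [integral_sub ((hBc2 i).integrable one_le_two) ((hY2 i).integrable one_le_two)]
    have e1 : ∫ ω, Bc i ω ∂μ = 0 := by
      simp only [hBc]
      rw [integral_sub ((hB i).integrable one_le_two) (integrable_const _)]
      simp
    have e2 : ∫ ω, Y i ω ∂μ = 0 := by
      simp only [hY]
      rw [integral_finset_sum _ fun j _ => ((hDc2 j).integrable one_le_two).const_mul _]
      refine Finset.sum_eq_zero fun j _ => ?_
      rw [integral_const_mul, hDcint j, mul_zero]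
    rw [e1, e2, sub_zero]
  ext i k
  have lhs : adjCov μ B B D W i k = ∫ ω, (Bc i ω - Y i ω) * (Bc k ω - Y k ω) ∂μ := by
    simp only [adjCov, cov, Matrix.of_apply, hX]
    rw [hXint i, hXint k, mul_zero, sub_zero]
  rw [lhs, integral_sub_mul_sub (hBc2 i) (hY2 i) (hBc2 k) (hY2 k)]
  have e1 : ∫ ω, Bc i ω * Bc k ω ∂μ = cov μ B B i k := (cov_apply_centered hB hB i k).symm
  have e2 : ∫ ω, Bc i ω * Y k ω ∂μ = ∑ l, P k l * cov μ B D i l := by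
    rw [show (∫ ω, Bc i ω * Y k ω ∂μ) = ∑ l, P k l * ∫ ω, Bc i ω * Dc l ω ∂μ from
      integral_mul_sum (hBc2 i) _ hDc2]
    exact Finset.sum_congr rfl fun l _ => by rw [cov_apply_centered hB hD]
  have e3 : ∫ ω, Y i ω * Bc k ω ∂μ = ∑ j, P i j * cov μ D B j k := by
    rw [show (∫ ω, Y i ω * Bc k ω ∂μ) = ∑ j, P i j * ∫ ω, Dc j ω * Bc k ω ∂μ from
      integral_sum_mul' (hBc2 k) _ hDc2]
    exact Finset.sum_congr rfl fun j _ => by rw [cov_apply_centered hD hB]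
  have e4 : ∫ ω, Y i ω * Y k ω ∂μ = ∑ j, P i j * ∑ l, P k l * cov μ D D j l := by
    rw [show (∫ ω, Y i ω * Y k ω ∂μ) = ∑ j, P i j * ∫ ω, Dc j ω * Y k ω ∂μ from
      integral_sum_mul' (hY2 k) _ hDc2]
    refine Finset.sum_congr rfl fun j _ => ?_
    rw [show (∫ ω, Dc j ω * Y k ω ∂μ) = ∑ l, P k l * ∫ ω, Dc j ω * Dc l ω ∂μ from
      integral_mul_sum (hDc2 j) _ hDc2]
    congr 1
    exact Finset.sum_congr rfl fun l _ => by rw [cov_apply_centered hD hD]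
  rw [e1, e2, e3, e4]
  simp only [Matrix.sub_apply, Matrix.add_apply, Matrix.mul_apply, transpose_apply]
  have hb : ∑ l, P k l * cov μ B D i l = ∑ l, cov μ B D i l * P k l :=
    Finset.sum_congr rfl fun l _ => mul_comm _ _
  have he : ∑ j, P i j * ∑ l, P k l * cov μ D D j l
      = ∑ l, (∑ j, P i j * cov μ D D j l) * P k l := by
    calc ∑ j, P i j * ∑ l, P k l * cov μ D D j l
        = ∑ j, ∑ l, (P i j * cov μ D D j l) * P k l := by
          refine Finset.sum_congr rfl fun j _ => ?_
          rw [Finset.mul_sum]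
          exact Finset.sum_congr rfl fun l _ => by ring
    _ = ∑ l, ∑ j, (P i j * cov μ D D j l) * P k l := Finset.sum_comm
    _ = ∑ l, (∑ j, P i j * cov μ D D j l) * P k l :=
          Finset.sum_congr rfl fun l _ => (Finset.sum_mul _ _ _).symm
  rw [hb, he]

end Main

/-- `Var_D(B) = (I − T_D(B))·Var(B)` where
`T_D(B) = Cov(B,D)·W·Cov(D,B)·U`, `W` is the Moore–Penrose inverse of `Var(D)` and
`U` is the Moore–Penrose inverse of `Var(B)`. -/
theorem adjVar_eq [MeasurableSpace Ω] (μ : Measure Ω) [IsProbabilityMeasure μ]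
    {m n : ℕ} (B : Fin m → Ω → ℝ) (D : Fin n → Ω → ℝ)
    (hB : ∀ i, Measurable (B i) ∧ MemLp (B i) 2 μ)
    (hD : ∀ i, Measurable (D i) ∧ MemLp (D i) 2 μ)
    (W : Matrix (Fin n) (Fin n) ℝ) (hW : IsMoorePenrose (cov μ D D) W)
    (U : Matrix (Fin m) (Fin m) ℝ) (hU : IsMoorePenrose (cov μ B B) U) :
    adjCov μ B B D W = (1 - cov μ B D * W * cov μ D B * U) * cov μ B B := by
  have hB2 : ∀ i, MemLp (B i) 2 μ := fun i => (hB i).2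
  have hD2 : ∀ i, MemLp (D i) 2 μ := fun i => (hD i).2
  have hWsymm : Wᵀ = W := hW.transpose_eq_self (cov_transpose D D)
  have hPt : (cov μ B D * W)ᵀ = W * cov μ D B := by
    rw [transpose_mul, hWsymm, cov_transpose]
  have key : cov μ D B * (U * cov μ B B) = cov μ D B := by
    have hz : cov μ B B * (1 - U * cov μ B B) = 0 := by
      rw [Matrix.mul_sub, Matrix.mul_one, ← Matrix.mul_assoc, hU.1, sub_self]
    have hz2 : cov μ D B * (1 - U * cov μ B B) = 0 := by
      ext j c
      have hcol : cov μ B B *ᵥ (fun r => (1 - U * cov μ B B) r c) = 0 := by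
        funext i
        have h := congrFun (congrFun hz i) c
        simpa [Matrix.mul_apply, Matrix.mulVec, dotProduct] using h
      have h := congrFun (cov_mulVec_eq_zero hB hD _ hcol) j
      simpa [Matrix.mul_apply, Matrix.mulVec, dotProduct] using h
    rw [Matrix.mul_sub, Matrix.mul_one, sub_eq_zero] at hz2
    exact hz2.symm
  have hred : (cov μ B D * W) * cov μ D D * (W * cov μ D B)
      = cov μ B D * W * cov μ D B := by
    calc (cov μ B D * W) * cov μ D D * (W * cov μ D B)
        = cov μ B D * ((W * cov μ D D * W) * cov μ D B) := by
          simp only [Matrix.mul_assoc]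
    _ = cov μ B D * (W * cov μ D B) := by rw [hW.2.1]
    _ = cov μ B D * W * cov μ D B := (Matrix.mul_assoc _ _ _).symm
  have hK : cov μ B D * W * cov μ D B * U * cov μ B B
      = cov μ B D * W * cov μ D B := by
    calc cov μ B D * W * cov μ D B * U * cov μ B B
        = cov μ B D * (W * (cov μ D B * (U * cov μ B B))) := by
          simp only [Matrix.mul_assoc]
    _ = cov μ B D * (W * cov μ D B) := by rw [key]
    _ = cov μ B D * W * cov μ D B := (Matrix.mul_assoc _ _ _).symm
  rw [adjCov_expand hB2 hD2 W, hPt, Matrix.sub_mul, Matrix.one_mul, hK, hred,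
    show cov μ B D * (W * cov μ D B) = cov μ B D * W * cov μ D B from
      (Matrix.mul_assoc _ _ _).symm]
  abel
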